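/- Let h₀, h_G be complex numbers and let a_q, b_q, a_p, b_p be nonnegative real numbers with a_q·a_p ≥ 1/4 and b_q·b_p ≥ 1/4. Define S_q = |h₀|²·a_q + |h_G|²·b_q and S_p = |h₀|²·a_p + |h_G|²·b_p. Then S_q · S_p ≥ |h₀|²·|h_G|². In particular, if additionally |h₀|² − |h_G|² = 1, then S_q · S_p ≥ |h₀|² (|h₀|² − 1). -/

import Mathlib

lemma aux_3 (A B aq bq ap bp : ℝ) (hA : 0 ≤ A) (hB : 0 ≤ B)
    (haq : 0 ≤ aq) (hbq : 0 ≤ bq) (hap : 0 ≤ ap) (hbp : 0 ≤ bp)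
    (hHeis0 : aq * ap ≥ 1 / 4) (hHeisG : bq * bp ≥ 1 / 4) :
    (A * aq + B * bq) * (A * ap + B * bp) ≥ A * B := by
  have hc : aq * bp + ap * bq ≥ 1 / 2 := by
    nlinarith [sq_nonneg (aq * bp - ap * bq), mul_nonneg haq hbp, mul_nonneg hap hbq,
      mul_le_mul hHeis0 hHeisG (by norm_num) (le_trans (by norm_num) hHeis0)]
  nlinarith [sq_nonneg (A - B), mul_nonneg hA hB,
    mul_nonneg (mul_nonneg hA hA) (le_trans (by norm_num) hHeis0),
    mul_nonneg (mul_nonneg hB hB) (le_trans (by norm_num) hHeisG),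
    mul_le_mul_of_nonneg_left hc (mul_nonneg hA hB)]

/-- State-independent uncertainty bound for a feedback oscillator with uncorrelated
in-coupled and ancillary modes: `S_q S_p ≥ |h₀|²|h_G|²`, and if `|h₀|² − |h_G|² = 1`
then `S_q S_p ≥ |h₀|²(|h₀|² − 1)`. -/
theorem stmt_3 (h₀ hG : ℂ) (aq bq ap bp : ℝ)
    (haq : 0 ≤ aq) (hbq : 0 ≤ bq) (hap : 0 ≤ ap) (hbp : 0 ≤ bp)
    (hHeis0 : aq * ap ≥ 1 / 4) (hHeisG : bq * bp ≥ 1 / 4) :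
    (‖h₀‖ ^ 2 * aq + ‖hG‖ ^ 2 * bq)
        * (‖h₀‖ ^ 2 * ap + ‖hG‖ ^ 2 * bp)
      ≥ ‖h₀‖ ^ 2 * ‖hG‖ ^ 2
    ∧ (‖h₀‖ ^ 2 - ‖hG‖ ^ 2 = 1 →
        (‖h₀‖ ^ 2 * aq + ‖hG‖ ^ 2 * bq)
          * (‖h₀‖ ^ 2 * ap + ‖hG‖ ^ 2 * bp)
        ≥ ‖h₀‖ ^ 2 * (‖h₀‖ ^ 2 - 1)) := by
  have hA : (0:ℝ) ≤ ‖h₀‖ ^ 2 := sq_nonneg _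
  have hB : (0:ℝ) ≤ ‖hG‖ ^ 2 := sq_nonneg _
  have h := aux_3 _ _ _ _ _ _ hA hB haq hbq hap hbp hHeis0 hHeisG
  exact ⟨h, fun hone => by rw [show ‖h₀‖ ^ 2 - 1 = ‖hG‖ ^ 2 by linarith]; exact h⟩
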